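/- Let D be a c-partite tournament with no (c+2)-cycle, and let x_1x_2⋯x_m be a directed path in D with dist(x_1, x_m) = m − 1. Then for every index i with 1 ≤ i ≤ m − c − 1, the vertices x_i and x_{i+c+1} belong to the same partite set of D. -/

import Mathlib

namespace MPT

variable {V : Type*}

/-- `D` together with the partition map `part : V → Fin c` is a `c`-partite tournament:
no arcs inside a partite set, and exactly one arc between any two vertices in
different partite sets. -/
structure IsCPT (D : Digraph V) (c : ℕ) (part : V → Fin c) : Prop where
  part_surj : Function.Surjective part
  not_adj_of_same : ∀ x y : V, part x = part y → ¬ D.Adj x y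
  xor_adj : ∀ x y : V, part x ≠ part y → Xor' (D.Adj x y) (D.Adj y x)

/-- `f 0, f 1, …, f n` is a directed walk of length `n` from `x` to `y` in `D`. -/
def IsWalk (D : Digraph V) (n : ℕ) (f : ℕ → V) (x y : V) : Prop :=
  f 0 = x ∧ f n = y ∧ ∀ i < n, D.Adj (f i) (f (i + 1))

/-- A digraph is strong if each vertex can reach each other vertex by a directed path. -/
def IsStrong (D : Digraph V) : Prop :=
  ∀ x y : V, x ≠ y → ∃ (n : ℕ) (f : ℕ → V), IsWalk D n f x y

/-- A `c`-partite tournament is rich if it is strong and every partite set has at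
least two vertices. -/
def IsRich (D : Digraph V) (c : ℕ) (part : V → Fin c) : Prop :=
  IsStrong D ∧ ∀ p : Fin c, ∃ u v : V, u ≠ v ∧ part u = p ∧ part v = p

/-- `D` contains a directed cycle with exactly `q` arcs (through `q` distinct vertices). -/
def HasCycle (D : Digraph V) (q : ℕ) : Prop :=
  ∃ f : ZMod q → V, Function.Injective f ∧ ∀ i : ZMod q, D.Adj (f i) (f (i + 1))

/-- The distance from `x` to `y`: the length of a shortest directed path. -/
noncomputable def dist (D : Digraph V) (x y : V) : ℕ :=
  sInf {n : ℕ | ∃ f : ℕ → V, IsWalk D n f x y}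

/-- `{i, j} ≡ {s, t} (mod n)` as unordered pairs of residues. -/
def ModEqPair (n i j s t : ℕ) : Prop :=
  (i ≡ s [MOD n] ∧ j ≡ t [MOD n]) ∨ (i ≡ t [MOD n] ∧ j ≡ s [MOD n])

/-- The arc rule of `Q¹_m` at the level of path indices: an arc from `x_i` to `x_j`
iff `j = i + 1`, or `i - j > 1` and `i ≢ j (mod c+1)`; with all arcs between the
residue classes of `s` and `t` (mod `c+1`) deleted. -/
def QArc (c s t i j : ℕ) : Prop :=
  (j = i + 1 ∨ (j + 1 < i ∧ ¬ i ≡ j [MOD c + 1])) ∧ ¬ ModEqPair (c + 1) i j s t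

/-- The indices of `Q¹_m` that may be blown up into a larger independent set. -/
def QBlowup (c m s t i : ℕ) : Prop :=
  i = 1 ∨ i = 2 ∨ i = m - 1 ∨ i = m ∨
  (s = 1 ∧ (t = 3 ∨ t = 4) ∧ i = t) ∨
  (i = m - 2 ∧ ModEqPair (c + 1) m (m - 2) s t) ∨
  (i = m - 3 ∧ ModEqPair (c + 1) m (m - 3) s t)

/-- `D` is obtained from the path-indexed digraph with arc rule `arc` on indices
`1, …, m` by replacing index `i` with an independent vertex set `A i`, where only
indices satisfying `allowed` may receive more than one vertex. -/
def IsBlowupOf (D : Digraph V) (m : ℕ) (arc : ℕ → ℕ → Prop) (allowed : ℕ → Prop) : Prop :=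
  ∃ A : ℕ → Set V,
    (∀ v : V, ∃ i, 1 ≤ i ∧ i ≤ m ∧ v ∈ A i) ∧
    (∀ i j, i ≠ j → Disjoint (A i) (A j)) ∧
    (∀ i, 1 ≤ i → i ≤ m → (A i).Nonempty) ∧
    (∀ i, 1 ≤ i → i ≤ m → ¬ allowed i → (A i).Subsingleton) ∧
    (∀ i j, 1 ≤ i → i ≤ m → 1 ≤ j → j ≤ m →
      ∀ u ∈ A i, ∀ w ∈ A j, (D.Adj u w ↔ arc i j))

/-- Membership in the family `𝒬¹_m`. -/
def IsInQ1 (D : Digraph V) (c m : ℕ) : Prop :=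
  ∃ s t : ℕ, 1 ≤ s ∧ s + 1 < t ∧ t ≤ c + 1 ∧
    IsBlowupOf D m (QArc c s t) (QBlowup c m s t)

/-- The four cases in which arcs between `A a` and `A b` get reversed to form `𝒬²_m`. -/
def QRevCase (c m s t a b : ℕ) : Prop :=
  (t = 3 ∧ s = 1 ∧ a = 2 ∧ b = 3) ∨
  (t = c + 1 ∧ s = 2 ∧ a = 1 ∧ b = 2) ∨
  (ModEqPair (c + 1) (m - 2) m s t ∧ a = m - 2 ∧ b = m - 1) ∨
  (ModEqPair (c + 1) (m - 1) (m - c) s t ∧ a = m - 1 ∧ b = m)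

/-- The arc rule obtained from `QArc` by reversing all arcs from index `a` to index `b`. -/
def QArcRev (c s t a b i j : ℕ) : Prop :=
  ((¬(i = a ∧ j = b) ∧ ¬(i = b ∧ j = a)) ∧ QArc c s t i j) ∨
  ((i = b ∧ j = a) ∧ QArc c s t a b)

/-- Membership in the family `𝒬²_m`. -/
def IsInQ2 (D : Digraph V) (c m : ℕ) : Prop :=
  ∃ s t a b : ℕ, 1 ≤ s ∧ s + 1 < t ∧ t ≤ c + 1 ∧ QRevCase c m s t a b ∧
    IsBlowupOf D m (QArcRev c s t a b) (QBlowup c m s t)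

/-- Membership in the family `𝒬_m = 𝒬¹_m ∪ 𝒬²_m`. -/
def IsInQ (D : Digraph V) (c m : ℕ) : Prop :=
  IsInQ1 D c m ∨ IsInQ2 D c m

/-- The arc rule of `W_m`: an arc from `x_i` to `x_j` iff `j = i + 1`, or
`i - j > 1` and `i ≢ j (mod c)`. -/
def WArc (c i j : ℕ) : Prop :=
  j = i + 1 ∨ (j + 1 < i ∧ ¬ i ≡ j [MOD c])

/-- The indices of `W_m` that are blown up (into sets of size at least two). -/
def WBlowup (m i : ℕ) : Prop :=
  i = 1 ∨ i = 2 ∨ i = m - 1 ∨ i = m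

/-- Membership in the family `𝒲_m`. -/
def IsInW (D : Digraph V) (c m : ℕ) : Prop :=
  ∃ A : ℕ → Set V,
    (∀ v : V, ∃ i, 1 ≤ i ∧ i ≤ m ∧ v ∈ A i) ∧
    (∀ i j, i ≠ j → Disjoint (A i) (A j)) ∧
    (∀ i, 1 ≤ i → i ≤ m → (A i).Nonempty) ∧
    (∀ i, 1 ≤ i → i ≤ m → WBlowup m i → ∃ u ∈ A i, ∃ w ∈ A i, u ≠ w) ∧
    (∀ i, 1 ≤ i → i ≤ m → ¬ WBlowup m i → (A i).Subsingleton) ∧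
    (∀ i j, 1 ≤ i → i ≤ m → 1 ≤ j → j ≤ m →
      ∀ u ∈ A i, ∀ w ∈ A j, (D.Adj u w ↔ WArc c i j))

/-- Membership in the family `ℋ`: there is an index `i` with `2 < i < c - 1`,
partite sets `W 2, …, W (c+1)` (with `W i` possibly of size one and all others of
size at least two) and a distinguished extra vertex `v1`, such that every vertex of
`W j₁` dominates every vertex of `W j₂` for `2 ≤ j₁ < j₂ ≤ c + 1`, there are no arcs
inside a `W j` nor between `v1` and `W i`, and between `v1` and each vertex of each
`W j` (`j ≠ i`) there is exactly one arc of arbitrary direction. -/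
def IsInH (D : Digraph V) (c : ℕ) : Prop :=
  ∃ i : ℕ, 2 < i ∧ i + 1 < c ∧
  ∃ (W : ℕ → Set V) (v1 : V),
    (∀ v : V, v = v1 ∨ ∃ j, 2 ≤ j ∧ j ≤ c + 1 ∧ v ∈ W j) ∧
    (∀ j, 2 ≤ j → j ≤ c + 1 → v1 ∉ W j) ∧
    (∀ j k, 2 ≤ j → j ≤ c + 1 → 2 ≤ k → k ≤ c + 1 → j ≠ k → Disjoint (W j) (W k)) ∧
    (W i).Nonempty ∧
    (∀ j, 2 ≤ j → j ≤ c + 1 → j ≠ i → ∃ u ∈ W j, ∃ w ∈ W j, u ≠ w) ∧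
    (∀ j k, 2 ≤ j → j < k → k ≤ c + 1 → ∀ u ∈ W j, ∀ w ∈ W k, D.Adj u w ∧ ¬ D.Adj w u) ∧
    (∀ j, 2 ≤ j → j ≤ c + 1 → ∀ u ∈ W j, ∀ w ∈ W j, ¬ D.Adj u w) ∧
    (∀ j, 2 ≤ j → j ≤ c + 1 → j ≠ i → ∀ u ∈ W j, Xor' (D.Adj v1 u) (D.Adj u v1)) ∧
    (∀ u ∈ W i, ¬ D.Adj v1 u ∧ ¬ D.Adj u v1) ∧
    ¬ D.Adj v1 v1

end MPT

open MPT

/-- On a path realizing the distance, all vertices are pairwise distinct. -/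
lemma distinct_on_path {V : Type*} (D : Digraph V) (m : ℕ) (x : ℕ → V)
    (hpath : ∀ i, 1 ≤ i → i < m → D.Adj (x i) (x (i + 1)))
    (hdist : MPT.dist D (x 1) (x m) = m - 1) :
    ∀ j k, 1 ≤ j → j < k → k ≤ m → x j ≠ x k := by
  intro j k hj hjk hk heq
  have hL : m - 1 - (k - j) < m - 1 := by omega
  set L := m - 1 - (k - j) with hLdef
  have hmem : L ∈ {n : ℕ | ∃ f : ℕ → V, IsWalk D n f (x 1) (x m)} := by
    refine ⟨fun n => if n < j then x (n + 1) else x (n + 1 + (k - j)), ?_, ?_, ?_⟩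
    · simp only [if_pos (show 0 < j by omega)]
    · by_cases hkm : k < m
      · have h1 : ¬ L < j := by omega
        simp only [if_neg h1]
        congr 1
        omega
      · have hkm' : k = m := by omega
        have h1 : L < j := by omega
        simp only [if_pos h1]
        have h2 : L + 1 = j := by omega
        rw [h2, heq, hkm']
    · intro n hn
      rcases lt_trichotomy (n + 1) j with h1 | h1 | h1
      · have h2 : n < j := by omega
        simp only [if_pos h2, if_pos h1]
        exact hpath (n + 1) (by omega) (by omega)
      · have h2 : n < j := by omega
        have h3 : ¬ n + 1 < j := by omega
        simp only [if_pos h2, if_neg h3]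
        have e1 : n + 1 = j := h1
        rw [e1, heq]
        have e2 : j + 1 + (k - j) = k + 1 := by omega
        rw [e2]
        exact hpath k (by omega) (by omega)
      · have h2 : ¬ n < j := by omega
        have h3 : ¬ n + 1 < j := by omega
        simp only [if_neg h2, if_neg h3]
        have e2 : n + 1 + 1 + (k - j) = n + 1 + (k - j) + 1 := by omega
        rw [e2]
        exact hpath (n + 1 + (k - j)) (by omega) (by omega)
  have hle := Nat.sInf_le hmem
  unfold MPT.dist at hdist
  omega

/-- in a `c`-partite tournament with no `(c+2)`-cycle, along a directed
path `x_1 x_2 ⋯ x_m` with `dist(x_1, x_m) = m - 1`, the vertices `x_i` and `x_{i+c+1}`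
belong to the same partite set. -/
theorem stmt_14 {V : Type*} (c : ℕ) (D : Digraph V) (part : V → Fin c)
    (hT : IsCPT D c part)
    (hno : ¬ HasCycle D (c + 2))
    (m : ℕ) (x : ℕ → V)
    (hpath : ∀ i, 1 ≤ i → i < m → D.Adj (x i) (x (i + 1)))
    (hdist : MPT.dist D (x 1) (x m) = m - 1) :
    ∀ i, 1 ≤ i → i + c + 1 ≤ m → part (x i) = part (x (i + c + 1)) := by
  intro i hi him
  by_contra hne
  have hc : 0 < c := (part (x i)).pos
  have hdistinct := distinct_on_path D m x hpath hdist
  rcases hT.xor_adj (x i) (x (i + c + 1)) hne with ⟨hfwd, _⟩ | ⟨hbwd, _⟩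
  · -- forward arc gives a shortcut walk of length m - c - 1 < m - 1
    have hL : m - c - 1 < m - 1 := by omega
    have hmem : m - c - 1 ∈ {n : ℕ | ∃ f : ℕ → V, IsWalk D n f (x 1) (x m)} := by
      refine ⟨fun n => if n < i then x (n + 1) else x (n + 1 + c), ?_, ?_, ?_⟩
      · simp only [if_pos (show 0 < i by omega)]
      · have h1 : ¬ m - c - 1 < i := by omega
        simp only [if_neg h1]
        congr 1
        omega
      · intro n hn
        rcases lt_trichotomy (n + 1) i with h1 | h1 | h1
        · have h2 : n < i := by omega
          simp only [if_pos h2, if_pos h1]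
          exact hpath (n + 1) (by omega) (by omega)
        · have h2 : n < i := by omega
          have h3 : ¬ n + 1 < i := by omega
          simp only [if_pos h2, if_neg h3]
          rw [h1]
          have e2 : i + 1 + c = i + c + 1 := by omega
          rw [e2]
          exact hfwd
        · have h2 : ¬ n < i := by omega
          have h3 : ¬ n + 1 < i := by omega
          simp only [if_neg h2, if_neg h3]
          have e2 : n + 1 + 1 + c = n + 1 + c + 1 := by omega
          rw [e2]
          exact hpath (n + 1 + c) (by omega) (by omega)
    have hle := Nat.sInf_le hmem
    unfold MPT.dist at hdist
    omega
  · -- backward arc gives a (c+2)-cycle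
    haveI : NeZero (c + 2) := ⟨by omega⟩
    apply hno
    refine ⟨fun z => x (i + z.val), ?_, ?_⟩
    · intro a b hab
      by_contra hab'
      have hval : a.val ≠ b.val := fun h => hab' (ZMod.val_injective _ h)
      have ha : a.val < c + 2 := ZMod.val_lt a
      have hb : b.val < c + 2 := ZMod.val_lt b
      rcases Nat.lt_or_ge a.val b.val with h | h
      · exact hdistinct (i + a.val) (i + b.val) (by omega) (by omega) (by omega) hab
      · exact hdistinct (i + b.val) (i + a.val) (by omega) (by omega) (by omega) hab.symm
    · intro z
      have hz : z.val < c + 2 := ZMod.val_lt z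
      haveI : Fact (1 < c + 2) := ⟨by omega⟩
      have hval1 : (1 : ZMod (c + 2)).val = 1 := ZMod.val_one (c + 2)
      have hadd : (z + 1).val = (z.val + 1) % (c + 2) := by
        rw [ZMod.val_add, hval1]
      show D.Adj (x (i + z.val)) (x (i + (z + 1).val))
      by_cases hzc : z.val = c + 1
      · have e1 : (z + 1).val = 0 := by rw [hadd, hzc]; exact Nat.mod_self _
        rw [e1, hzc]
        simpa [Nat.add_assoc] using hbwd
      · have e1 : (z + 1).val = z.val + 1 := by rw [hadd]; exact Nat.mod_eq_of_lt (by omega)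
        rw [e1]
        have e2 : i + (z.val + 1) = i + z.val + 1 := by omega
        rw [e2]
        exact hpath (i + z.val) (by omega) (by omega)
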